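/- For γ ≥ 1, define I_γ: [2, ∞) → ℝ by I_γ(x) = (1/4)∫_{γ + 1/γ}^{x} √(y² − 4) dy − (γ/2)(x − (γ + 1/γ)) + (1/8)(x² − (γ + 1/γ)²). Then I_γ is convex on [2, ∞), I_γ(x) ≥ 0 for all x ∈ [2, ∞), and I_γ(x) = 0 if and only if x = γ + 1/γ. -/

import Mathlib

open Real intervalIntegral

/-- For `γ ≥ 1`, the rate function
`I_γ(x) = (1/4)∫_{γ+1/γ}^x √(y² - 4) dy - (γ/2)(x - (γ+1/γ)) + (1/8)(x² - (γ+1/γ)²)`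
is convex on `[2, ∞)`, nonnegative on `[2, ∞)`, and vanishes exactly at `x = γ + 1/γ`. -/
theorem I_gamma_convex_nonneg (γ : ℝ) (hγ : 1 ≤ γ) :
    let I : ℝ → ℝ := fun x =>
      (1 / 4) * (∫ y in (γ + 1 / γ)..x, Real.sqrt (y ^ 2 - 4))
        - (γ / 2) * (x - (γ + 1 / γ)) + (1 / 8) * (x ^ 2 - (γ + 1 / γ) ^ 2)
    ConvexOn ℝ (Set.Ici (2 : ℝ)) I ∧ (∀ x ∈ Set.Ici (2 : ℝ), 0 ≤ I x) ∧
      (∀ x ∈ Set.Ici (2 : ℝ), I x = 0 ↔ x = γ + 1 / γ) := by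
  intro I
  have hγ0 : (0 : ℝ) < γ := lt_of_lt_of_le one_pos hγ
  set c : ℝ := γ + 1 / γ with hc
  have hc2 : (2 : ℝ) ≤ c := by
    have h1 : γ + 1 / γ - 2 = (γ - 1) ^ 2 / γ := by field_simp; ring
    have h2 : (0:ℝ) ≤ (γ - 1) ^ 2 / γ := div_nonneg (sq_nonneg _) hγ0.le
    rw [hc]; linarith
  have hfc : Continuous fun y : ℝ => Real.sqrt (y ^ 2 - 4) := by
    exact ((continuous_pow 2).sub continuous_const).sqrt
  -- derivative
  set D : ℝ → ℝ := fun x => (1 / 4) * Real.sqrt (x ^ 2 - 4) - γ / 2 + x / 4 with hD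
  have hderiv : ∀ x : ℝ, HasDerivAt I (D x) x := by
    intro x
    have h1 : HasDerivAt (fun x => ∫ y in c..x, Real.sqrt (y ^ 2 - 4))
        (Real.sqrt (x ^ 2 - 4)) x :=
      intervalIntegral.integral_hasDerivAt_right (hfc.intervalIntegrable _ _)
        hfc.aestronglyMeasurable.stronglyMeasurableAtFilter hfc.continuousAt
    have h2 : HasDerivAt (fun x : ℝ => (γ / 2) * (x - c)) (γ / 2) x := by
      simpa using ((hasDerivAt_id x).sub_const c).const_mul (γ / 2)
    have h3 : HasDerivAt (fun x : ℝ => (1 / 8) * (x ^ 2 - c ^ 2)) (x / 4) x := by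
      have := ((hasDerivAt_pow 2 x).sub_const (c ^ 2)).const_mul (1 / 8 : ℝ)
      refine this.congr_deriv ?_
      ring
    exact ((h1.const_mul (1 / 4 : ℝ)).sub h2).add h3
  have hIdiff : ∀ x : ℝ, deriv I x = D x := fun x => (hderiv x).deriv
  have hIcont : Continuous I :=
    continuous_iff_continuousAt.2 fun x => (hderiv x).continuousAt
  -- monotonicity of D on [2, ∞)
  have hDmono : StrictMonoOn D (Set.Ici (2 : ℝ)) := by
    intro a ha b hb hab
    simp only [Set.mem_Ici] at ha hb
    have hsq : Real.sqrt (a ^ 2 - 4) ≤ Real.sqrt (b ^ 2 - 4) :=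
      Real.sqrt_le_sqrt (by nlinarith)
    simp only [hD]
    nlinarith
  have hDc : D c = 0 := by
    have h1 : c ^ 2 - 4 = (γ - 1 / γ) ^ 2 := by rw [hc]; field_simp; ring
    have h2 : (0 : ℝ) ≤ γ - 1 / γ := by
      rw [sub_nonneg, div_le_iff₀ hγ0]; nlinarith
    simp only [hD]
    rw [h1, Real.sqrt_sq h2, hc]
    ring
  -- I c = 0
  have hIc : I c = 0 := by rw [hc]; simp [I]
  -- convexity
  have hconv : ConvexOn ℝ (Set.Ici (2 : ℝ)) I :=
    (StrictMonoOn.strictConvexOn_of_deriv (convex_Ici 2) hIcont.continuousOn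
      (by
        rw [interior_Ici]
        intro a ha b hb hab
        rw [hIdiff, hIdiff]
        exact hDmono (Set.mem_Ici.2 (le_of_lt (Set.mem_Ioi.1 ha))) (Set.mem_Ici.2 (le_of_lt (Set.mem_Ioi.1 hb))) hab)).convexOn
  -- I strictly increasing on [c, ∞)
  have hmono : StrictMonoOn I (Set.Ici c) := by
    apply strictMonoOn_of_deriv_pos (convex_Ici c) hIcont.continuousOn
    intro x hx
    rw [interior_Ici] at hx
    rw [hIdiff]
    have := hDmono (Set.mem_Ici.2 hc2) (Set.mem_Ici.2 (hc2.trans hx.le)) hx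
    linarith [hDc]
  -- I strictly decreasing on [2, c]
  have hanti : StrictAntiOn I (Set.Icc 2 c) := by
    apply strictAntiOn_of_deriv_neg (convex_Icc 2 c) hIcont.continuousOn
    intro x hx
    rw [interior_Icc] at hx
    rw [hIdiff]
    have := hDmono (Set.mem_Ici.2 hx.1.le) (Set.mem_Ici.2 hc2) hx.2
    linarith [hDc]
  have key : ∀ x ∈ Set.Ici (2 : ℝ), x ≠ c → 0 < I x := by
    intro x hx hne
    rcases lt_or_gt_of_ne hne with h | h
    · have := hanti ⟨hx, h.le⟩ ⟨hc2, le_rfl⟩ h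
      rwa [hIc] at this
    · have := hmono (Set.mem_Ici.2 le_rfl) (Set.mem_Ici.2 h.le) h
      rwa [hIc] at this
  refine ⟨hconv, ?_, ?_⟩
  · intro x hx
    rcases eq_or_ne x c with h | h
    · rw [h, hIc]
    · exact (key x hx h).le
  · intro x hx
    constructor
    · intro h0
      by_contra hne
      exact absurd h0 (ne_of_gt (key x hx hne))
    · intro h; rw [h]; exact hIc
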